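/- For rank r = 2 with natural number weights u_1, u_2, l, d_1, d_2, the generating function A = A_{0,0}(x) ∈ ℚ⟦x⟧ for the (u,l,d)-Motzkin numbers of rank 2 satisfies the polynomial equation 0 = 1 + (lx−1)A − x²(d_2u_2 − d_1u_1)A² + x²(x u_1² d_2 + x u_2 d_1² − 2xl u_2 d_2 + 2 d_2 u_2)A³ − u_2 d_2 x⁴ (d_2 u_2 − d_1 u_1)A⁴ + x⁴ u_2² d_2² (lx−1)A⁵ + x⁶ u_2³ d_2³ A⁶. -/

import Mathlib

open PowerSeries Finset

/-- The weight (number of color choices) of a single step of vertical displacement `z`: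
up-steps `(1,j)` have weight `u j`, the level-step `(1,0)` has weight `l`, and
down-steps `(1,-j)` have weight `d j`. -/
def stepWeight (u : ℕ → ℕ) (l : ℕ) (d : ℕ → ℕ) (z : ℤ) : ℕ :=
  if 0 < z then u z.toNat else if z < 0 then d (-z).toNat else l

/-- `motzkinCount r u l d s t n` is the weighted number `|𝒜_{s,t}(n)|` of lattice paths of
length `n` using admissible steps `(1,z)` with `z ∈ {-r, …, r}` (step `i` is encoded by
`f i : Fin (2*r+1)` via `z = (f i : ℤ) - r`), starting at height `s`, ending at height `t`,
and never going below the x-axis; each path is counted with weight the product of the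
weights of its steps (i.e. the number of its colorings). -/
def motzkinCount (r : ℕ) (u : ℕ → ℕ) (l : ℕ) (d : ℕ → ℕ) (s t : ℕ) (n : ℕ) : ℕ :=
  ∑ f : Fin n → Fin (2 * r + 1),
    if (∀ k : Fin (n + 1),
          0 ≤ (s : ℤ) + ∑ i : Fin n, if (i : ℕ) < (k : ℕ) then ((f i : ℤ) - r) else 0) ∧
        (s : ℤ) + (∑ i : Fin n, ((f i : ℤ) - r)) = t
    then ∏ i : Fin n, stepWeight u l d ((f i : ℤ) - r)
    else 0

/-- The generating function `A_{s,t}(x) = Σ_{n≥0} |𝒜_{s,t}(n)| xⁿ ∈ ℚ⟦x⟧`. -/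
noncomputable def motzkinGF (r : ℕ) (u : ℕ → ℕ) (l : ℕ) (d : ℕ → ℕ) (s t : ℕ) :
    PowerSeries ℚ :=
  PowerSeries.mk fun n => (motzkinCount r u l d s t n : ℚ)

namespace MotzkinAux

def mcnt (p q r v w : ℚ) : ℕ → ℤ → ℤ → ℚ
  | 0, s, t => if s = t ∧ 0 ≤ s then 1 else 0
  | n+1, s, t =>
    if s < 0 then 0 else
      w * mcnt p q r v w n (s-2) t + v * mcnt p q r v w n (s-1) t
        + r * mcnt p q r v w n s t
        + p * mcnt p q r v w n (s+1) t + q * mcnt p q r v w n (s+2) t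

variable (p q r v w : ℚ)

lemma mcnt_zero (s t : ℤ) : mcnt p q r v w 0 s t = if s = t ∧ 0 ≤ s then 1 else 0 := rfl

lemma mcnt_succ (n : ℕ) (s t : ℤ) : mcnt p q r v w (n+1) s t =
    if s < 0 then 0 else
      w * mcnt p q r v w n (s-2) t + v * mcnt p q r v w n (s-1) t
        + r * mcnt p q r v w n s t
        + p * mcnt p q r v w n (s+1) t + q * mcnt p q r v w n (s+2) t := rfl

lemma mcnt_neg_left {s : ℤ} (hs : s < 0) (n : ℕ) (t : ℤ) :
    mcnt p q r v w n s t = 0 := by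
  cases n with
  | zero => rw [mcnt_zero, if_neg (by omega)]
  | succ n => rw [mcnt_succ, if_pos hs]

lemma mcnt_neg_right {t : ℤ} (ht : t < 0) (n : ℕ) : ∀ s, mcnt p q r v w n s t = 0 := by
  induction n with
  | zero => intro s; rw [mcnt_zero, if_neg (by omega)]
  | succ n ih =>
    intro s
    rw [mcnt_succ, ih, ih, ih, ih, ih]
    split <;> ring

lemma mcnt_last (n : ℕ) : ∀ s t : ℤ, mcnt p q r v w (n+1) s t =
    if t < 0 then 0 else
      q * mcnt p q r v w n s (t-2) + p * mcnt p q r v w n s (t-1)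
        + r * mcnt p q r v w n s t
        + v * mcnt p q r v w n s (t+1) + w * mcnt p q r v w n s (t+2) := by
  induction n with
  | zero =>
    intro s t
    by_cases hs : s < 0
    · rw [mcnt_neg_left _ _ _ _ _ hs, mcnt_neg_left _ _ _ _ _ hs,
        mcnt_neg_left _ _ _ _ _ hs, mcnt_neg_left _ _ _ _ _ hs,
        mcnt_neg_left _ _ _ _ _ hs, mcnt_neg_left _ _ _ _ _ hs]
      split <;> ring
    · by_cases ht : t < 0
      · rw [if_pos ht, mcnt_succ, if_neg hs,
          mcnt_neg_right _ _ _ _ _ ht, mcnt_neg_right _ _ _ _ _ ht,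
          mcnt_neg_right _ _ _ _ _ ht, mcnt_neg_right _ _ _ _ _ ht,
          mcnt_neg_right _ _ _ _ _ ht]
        ring
      · rw [if_neg ht, mcnt_succ, if_neg hs]
        have e1 : mcnt p q r v w 0 (s-2) t = mcnt p q r v w 0 s (t+2) := by
          rw [mcnt_zero, mcnt_zero]; split_ifs <;> first | rfl | omega
        have e2 : mcnt p q r v w 0 (s-1) t = mcnt p q r v w 0 s (t+1) := by
          rw [mcnt_zero, mcnt_zero]; split_ifs <;> first | rfl | omega
        have e3 : mcnt p q r v w 0 (s+1) t = mcnt p q r v w 0 s (t-1) := by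
          rw [mcnt_zero, mcnt_zero]; split_ifs <;> first | rfl | omega
        have e4 : mcnt p q r v w 0 (s+2) t = mcnt p q r v w 0 s (t-2) := by
          rw [mcnt_zero, mcnt_zero]; split_ifs <;> first | rfl | omega
        rw [e1, e2, e3, e4]
        ring
  | succ n ih =>
    intro s t
    conv_lhs => rw [mcnt_succ]; rw [ih, ih, ih, ih, ih]
    conv_rhs => rw [mcnt_succ, mcnt_succ, mcnt_succ, mcnt_succ, mcnt_succ]
    split_ifs <;> ring

lemma mcnt_rev (n : ℕ) : ∀ s t : ℤ, mcnt p q r v w n s t = mcnt v w r p q n t s := by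
  induction n with
  | zero =>
    intro s t
    rw [mcnt_zero, mcnt_zero]
    split_ifs <;> first | rfl | (exfalso; omega)
  | succ n ih =>
    intro s t
    rw [mcnt_succ, ih, ih, ih, ih, ih, mcnt_last v w r p q]


/-- first passage from height σ+1 down to σ (weights of paths staying > σ till final step). -/
def fp (p q r v w : ℚ) (σ : ℤ) : ℕ → ℚ
  | 0 => 0
  | n+1 => v * mcnt p q r v w n σ 0 + w * mcnt p q r v w n σ 1

def conv (φ ψ : ℕ → ℚ) (n : ℕ) : ℚ := ∑ k ∈ Finset.range (n+1), φ k * ψ (n - k)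

lemma conv_mcnt_succ (φ : ℕ → ℚ) {t : ℤ} (ht : ¬ t < 0) (n : ℕ) :
    conv φ (fun m => mcnt p q r v w m 0 t) (n+1) =
      φ (n+1) * (if (0:ℤ) = t then 1 else 0)
      + (q * conv φ (fun m => mcnt p q r v w m 0 (t-2)) n
        + p * conv φ (fun m => mcnt p q r v w m 0 (t-1)) n
        + r * conv φ (fun m => mcnt p q r v w m 0 t) n
        + v * conv φ (fun m => mcnt p q r v w m 0 (t+1)) n
        + w * conv φ (fun m => mcnt p q r v w m 0 (t+2)) n) := by
  unfold conv
  rw [Finset.sum_range_succ]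
  simp only [Nat.sub_self]
  have h0 : mcnt p q r v w 0 0 t = if (0:ℤ) = t then 1 else 0 := by
    rw [mcnt_zero]
    split_ifs <;> first | rfl | omega
  rw [h0]
  have key : ∀ k ∈ Finset.range (n+1), φ k * mcnt p q r v w (n+1-k) 0 t
      = q * (φ k * mcnt p q r v w (n-k) 0 (t-2))
        + p * (φ k * mcnt p q r v w (n-k) 0 (t-1))
        + r * (φ k * mcnt p q r v w (n-k) 0 t)
        + v * (φ k * mcnt p q r v w (n-k) 0 (t+1))
        + w * (φ k * mcnt p q r v w (n-k) 0 (t+2)) := by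
    intro k hk
    have hk' : n + 1 - k = (n - k) + 1 := by
      have := Finset.mem_range.mp hk; omega
    rw [hk', mcnt_last, if_neg ht]
    ring
  rw [Finset.sum_congr rfl key]
  simp only [Finset.sum_add_distrib, ← Finset.mul_sum]
  ring

lemma claim (σ : ℤ) (hσ : 0 ≤ σ) : ∀ (n : ℕ) (t : ℤ),
    mcnt p q r v w n (σ+1) t =
      mcnt p q r v w n σ (t-1)
        + conv (fp p q r v w σ) (fun m => mcnt p q r v w m 0 t) n := by
  intro n
  induction n with
  | zero =>
    intro t
    have hc : conv (fp p q r v w σ) (fun m => mcnt p q r v w m 0 t) 0 = 0 := by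
      unfold conv
      rw [Finset.sum_range_one]
      show fp p q r v w σ 0 * _ = 0
      rw [show fp p q r v w σ 0 = 0 from rfl]
      ring
    rw [hc, mcnt_zero, mcnt_zero]
    split_ifs <;> first | (exfalso; omega) | ring
  | succ n ih =>
    intro t
    by_cases ht : t < 0
    · rw [mcnt_neg_right _ _ _ _ _ ht, mcnt_neg_right _ _ _ _ _ (show t-1<0 by omega)]
      have hc : conv (fp p q r v w σ) (fun m => mcnt p q r v w m 0 t) (n+1) = 0 := by
        unfold conv
        apply Finset.sum_eq_zero
        intro k hk
        show fp p q r v w σ k * mcnt p q r v w (n+1-k) 0 t = 0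
        rw [mcnt_neg_right _ _ _ _ _ ht]
        ring
      rw [hc]; ring
    · rw [mcnt_last, if_neg ht, ih, ih, ih, ih, ih, conv_mcnt_succ _ _ _ _ _ _ ht,
        mcnt_last p q r v w n σ (t-1)]
      rcases (show t = 0 ∨ 1 ≤ t by omega) with ht0 | ht1
      · subst ht0
        norm_num
        rw [mcnt_neg_right _ _ _ _ _ (show (-3:ℤ)<0 by norm_num) n,
          mcnt_neg_right _ _ _ _ _ (show (-2:ℤ)<0 by norm_num) n,
          mcnt_neg_right _ _ _ _ _ (show (-1:ℤ)<0 by norm_num) n]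
        simp only [fp]
        ring
      · rw [if_neg (show ¬ (t-1 < 0) by omega), if_neg (show ¬ ((0:ℤ) = t) by omega)]
        rw [show (t:ℤ)-2-1 = t-1-2 by ring, show (t:ℤ)-1-1 = t-1-1 by ring,
          show (t:ℤ)+1-1 = t-1+1 by ring, show (t:ℤ)+2-1 = t-1+2 by ring]
        ring



lemma inner_sum (u : ℕ → ℕ) (l : ℕ) (d : ℕ → ℕ) (s t n : ℕ) (z : Fin (2*2+1)) :
    ∑ g : Fin n → Fin (2*2+1),
      ((if (∀ k : Fin (n + 1 + 1),
              0 ≤ (s:ℤ) + ∑ i : Fin (n+1),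
                if (i:ℕ) < (k:ℕ) then ((Fin.cons (α := fun _ => Fin (2*2+1)) z g i) : ℤ) - 2 else 0) ∧
           (s:ℤ) + ∑ i : Fin (n+1), (((Fin.cons (α := fun _ => Fin (2*2+1)) z g i) : ℤ) - 2) = (t:ℤ)
         then ∏ i : Fin (n+1), stepWeight u l d (((Fin.cons (α := fun _ => Fin (2*2+1)) z g i) : ℤ) - 2)
         else 0 : ℕ) : ℚ)
    = (stepWeight u l d ((z:ℤ) - 2) : ℚ) *
        (if 0 ≤ (s:ℤ) + ((z:ℤ) - 2)
         then (motzkinCount 2 u l d ((s:ℤ) + ((z:ℤ)-2)).toNat t n : ℚ) else 0) := by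
  have hpre : ∀ (g : Fin n → Fin (2*2+1)) (j : Fin (n+1)),
      (∑ i : Fin (n+1), if (i:ℕ) < ((j.succ : Fin (n+1+1)):ℕ)
          then ((Fin.cons (α := fun _ => Fin (2*2+1)) z g i) : ℤ) - 2 else 0)
        = ((z:ℤ) - 2) + ∑ i : Fin n, (if (i:ℕ) < (j:ℕ) then ((g i : Fin (2*2+1)) : ℤ) - 2 else 0) := by
    intro g j
    rw [Fin.sum_univ_succ]
    simp only [Fin.cons_zero, Fin.cons_succ, Fin.val_zero, Fin.val_succ]
    rw [if_pos (by omega : 0 < (j:ℕ) + 1)]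
    congr 1
    apply Finset.sum_congr rfl
    intro i _
    simp [Nat.add_lt_add_iff_right]
  have hsum : ∀ (g : Fin n → Fin (2*2+1)),
      (∑ i : Fin (n+1), (((Fin.cons (α := fun _ => Fin (2*2+1)) z g i) : ℤ) - 2))
        = ((z:ℤ) - 2) + ∑ i : Fin n, (((g i : Fin (2*2+1)) : ℤ) - 2) := by
    intro g
    rw [Fin.sum_univ_succ]
    simp only [Fin.cons_zero, Fin.cons_succ]
  by_cases hz : 0 ≤ (s:ℤ) + ((z:ℤ) - 2)
  · rw [if_pos hz, motzkinCount, Nat.cast_sum, Finset.mul_sum]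
    have hs'' : ((((s:ℤ) + ((z:ℤ)-2)).toNat : ℕ) : ℤ) = (s:ℤ) + ((z:ℤ)-2) :=
      Int.toNat_of_nonneg hz
    apply Finset.sum_congr rfl
    intro g _
    have hiff : ((∀ k : Fin (n + 1 + 1),
              0 ≤ (s:ℤ) + ∑ i : Fin (n+1),
                if (i:ℕ) < (k:ℕ) then ((Fin.cons (α := fun _ => Fin (2*2+1)) z g i) : ℤ) - 2 else 0) ∧
           (s:ℤ) + ∑ i : Fin (n+1), (((Fin.cons (α := fun _ => Fin (2*2+1)) z g i) : ℤ) - 2) = (t:ℤ))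
        ↔ ((∀ k : Fin (n + 1),
              0 ≤ ((((s:ℤ) + ((z:ℤ)-2)).toNat : ℕ) : ℤ) + ∑ i : Fin n,
                if (i:ℕ) < (k:ℕ) then ((g i : Fin (2*2+1)) : ℤ) - (2:ℕ) else 0) ∧
           ((((s:ℤ) + ((z:ℤ)-2)).toNat : ℕ) : ℤ)
             + ∑ i : Fin n, (((g i : Fin (2*2+1)) : ℤ) - (2:ℕ)) = (t:ℤ)) := by
      push_cast
      constructor
      · rintro ⟨h1, h2⟩
        constructor
        · intro k
          have hk := h1 k.succ
          rw [hpre g k] at hk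
          rw [hs'']
          linarith
        · rw [hsum g] at h2
          rw [hs'']
          linarith
      · rintro ⟨h1, h2⟩
        constructor
        · intro k
          refine Fin.cases ?_ ?_ k
          · have hzero : (∑ i : Fin (n+1), if (i:ℕ) < (((0 : Fin (n+1+1))):ℕ)
                then ((Fin.cons (α := fun _ => Fin (2*2+1)) z g i) : ℤ) - 2 else 0) = 0 := by
              apply Finset.sum_eq_zero
              intro i _
              simp
            rw [hzero]
            simp
          · intro j
            rw [hpre g j]
            have := h1 j
            rw [hs''] at this
            linarith
        · rw [hsum g]
          rw [hs''] at h2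
          linarith
    rw [apply_ite (Nat.cast : ℕ → ℚ), Nat.cast_zero, if_congr hiff rfl rfl,
      apply_ite (Nat.cast : ℕ → ℚ), Nat.cast_zero, mul_ite, mul_zero]
    rcases em ((∀ k : Fin (n + 1),
              0 ≤ ((((s:ℤ) + ((z:ℤ)-2)).toNat : ℕ) : ℤ) + ∑ i : Fin n,
                if (i:ℕ) < (k:ℕ) then ((g i : Fin (2*2+1)) : ℤ) - (2:ℕ) else 0) ∧
           ((((s:ℤ) + ((z:ℤ)-2)).toNat : ℕ) : ℤ)
             + ∑ i : Fin n, (((g i : Fin (2*2+1)) : ℤ) - (2:ℕ)) = (t:ℤ)) with hc | hc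
    · rw [if_pos hc, if_pos hc, Nat.cast_prod, Nat.cast_prod, Fin.prod_univ_succ]
      simp only [Fin.cons_zero, Fin.cons_succ]
      push_cast
      ring
    · rw [if_neg hc, if_neg hc]
  · rw [if_neg hz, mul_zero]
    apply Finset.sum_eq_zero
    intro g _
    rw [if_neg, Nat.cast_zero]
    rintro ⟨h1, h2⟩
    have hk := h1 (Fin.succ 0)
    rw [hpre g 0] at hk
    have hzero : (∑ i : Fin n, if (i:ℕ) < ((0 : Fin (n+1)):ℕ)
        then ((g i : Fin (2*2+1)) : ℤ) - 2 else 0) = 0 := by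
      apply Finset.sum_eq_zero
      intro i _
      simp
    rw [hzero] at hk
    omega

-- the bridge
lemma motzkin_eq_mcnt (u : ℕ → ℕ) (l : ℕ) (d : ℕ → ℕ) :
    ∀ (n : ℕ) (s t : ℕ),
      (motzkinCount 2 u l d s t n : ℚ) =
        mcnt (u 1) (u 2) l (d 1) (d 2) n (s : ℤ) (t : ℤ) := by
  intro n
  induction n with
  | zero =>
    intro s t
    rw [motzkinCount, mcnt_zero]
    simp only [Finset.univ_unique, Finset.sum_singleton, Finset.univ_eq_empty,
      Finset.sum_empty, Finset.prod_empty, add_zero]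
    split_ifs with h1 h2 h2
    · simp
    · exact absurd ⟨h1.2, by omega⟩ h2
    · exact absurd ⟨fun _ => by omega, h2.1⟩ h1
    · simp
  | succ n ih =>
    intro s t
    rw [motzkinCount, Nat.cast_sum]
    rw [← Equiv.sum_comp (Fin.consEquiv (fun _ : Fin (n+1) => Fin (2*2+1)))]
    rw [Fintype.sum_prod_type]
    simp only [Fin.consEquiv_apply, Nat.cast_ofNat]
    rw [Finset.sum_congr rfl (fun x _ => inner_sum u l d s t n x)]
    have h5 : ∀ (F : Fin (2*2+1) → ℚ), ∑ x, F x = F 0 + F 1 + F 2 + F 3 + F 4 := by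
      intro F
      exact Fin.sum_univ_five F
    rw [h5]
    have v0 : (((0 : Fin (2*2+1)) : ℕ) : ℤ) = 0 := rfl
    have v1 : (((1 : Fin (2*2+1)) : ℕ) : ℤ) = 1 := rfl
    have v2 : (((2 : Fin (2*2+1)) : ℕ) : ℤ) = 2 := rfl
    have v3 : (((3 : Fin (2*2+1)) : ℕ) : ℤ) = 3 := rfl
    have v4 : (((4 : Fin (2*2+1)) : ℕ) : ℤ) = 4 := rfl
    rw [v0, v1, v2, v3, v4]
    have hterm : ∀ δ : ℤ, (if 0 ≤ (s:ℤ) + δ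
        then ((motzkinCount 2 u l d ((s:ℤ)+δ).toNat t n : ℕ) : ℚ) else 0)
        = mcnt (↑(u 1)) (↑(u 2)) (↑l) (↑(d 1)) (↑(d 2)) n ((s:ℤ)+δ) (t:ℤ) := by
      intro δ
      by_cases hδ : 0 ≤ (s:ℤ)+δ
      · rw [if_pos hδ, ih ((s:ℤ)+δ).toNat t, Int.toNat_of_nonneg hδ]
      · rw [if_neg hδ, mcnt_neg_left _ _ _ _ _ (by omega)]
    rw [hterm, hterm, hterm, hterm, hterm]
    have w0 : stepWeight u l d ((0:ℤ) - 2) = d 2 := rfl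
    have w1 : stepWeight u l d ((1:ℤ) - 2) = d 1 := rfl
    have w2 : stepWeight u l d ((2:ℤ) - 2) = l := rfl
    have w3 : stepWeight u l d ((3:ℤ) - 2) = u 1 := rfl
    have w4 : stepWeight u l d ((4:ℤ) - 2) = u 2 := rfl
    rw [w0, w1, w2, w3, w4]
    rw [mcnt_succ, if_neg (show ¬((s:ℤ) < 0) by omega)]
    rw [show (s:ℤ) + ((0:ℤ)-2) = (s:ℤ)-2 by ring, show (s:ℤ) + ((1:ℤ)-2) = (s:ℤ)-1 by ring,
      show (s:ℤ) + ((2:ℤ)-2) = (s:ℤ) by ring, show (s:ℤ) + ((3:ℤ)-2) = (s:ℤ)+1 by ring,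
      show (s:ℤ) + ((4:ℤ)-2) = (s:ℤ)+2 by ring]



section Series

open PowerSeries

lemma mk_mul_mk (φ ψ : ℕ → ℚ) :
    (PowerSeries.mk φ) * (PowerSeries.mk ψ) = PowerSeries.mk (conv φ ψ) := by
  ext n
  rw [PowerSeries.coeff_mk, PowerSeries.coeff_mul, Finset.Nat.sum_antidiagonal_eq_sum_range_succ_mk]
  unfold conv
  simp [PowerSeries.coeff_mk]

noncomputable def S (p q r v w : ℚ) (s t : ℤ) : PowerSeries ℚ :=
  PowerSeries.mk fun n => mcnt p q r v w n s t

noncomputable def FP (p q r v w : ℚ) (σ : ℤ) : PowerSeries ℚ :=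
  PowerSeries.mk (fp p q r v w σ)

variable (p q r v w : ℚ)

lemma S_neg_right {t : ℤ} (ht : t < 0) (s : ℤ) : S p q r v w s t = 0 := by
  ext n
  simp [S, PowerSeries.coeff_mk, mcnt_neg_right _ _ _ _ _ ht]

lemma FP_eq (σ : ℤ) :
    FP p q r v w σ = X * (C v * S p q r v w σ 0 + C w * S p q r v w σ 1) := by
  ext n
  cases n with
  | zero =>
    simp [FP, PowerSeries.coeff_mk, PowerSeries.coeff_zero_eq_constantCoeff, fp]
  | succ n =>
    rw [PowerSeries.coeff_succ_X_mul]
    simp [FP, S, PowerSeries.coeff_mk, fp]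

lemma S_claim (σ : ℤ) (hσ : 0 ≤ σ) (t : ℤ) :
    S p q r v w (σ+1) t = S p q r v w σ (t-1) + FP p q r v w σ * S p q r v w 0 t := by
  rw [show FP p q r v w σ * S p q r v w 0 t
      = PowerSeries.mk (conv (fp p q r v w σ) (fun m => mcnt p q r v w m 0 t)) from
    mk_mul_mk _ _]
  ext n
  simp only [S, map_add, PowerSeries.coeff_mk]
  rw [claim p q r v w σ hσ n t]

lemma S_rev (s t : ℤ) : S p q r v w s t = S v w r p q t s := by
  ext n
  simp [S, PowerSeries.coeff_mk, mcnt_rev p q r v w n s t]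

lemma S_first_step :
    S p q r v w 0 0 = 1 + X * (C r * S p q r v w 0 0 + C p * S p q r v w 1 0
      + C q * S p q r v w 2 0) := by
  ext n
  cases n with
  | zero =>
    simp [S, PowerSeries.coeff_mk, PowerSeries.coeff_zero_eq_constantCoeff, mcnt_zero]
  | succ n =>
    rw [map_add, PowerSeries.coeff_succ_X_mul]
    have h1 : (PowerSeries.coeff (n+1)) (1 : PowerSeries ℚ) = 0 := by
      simp [PowerSeries.coeff_one]
    rw [h1]
    simp only [S, map_add, PowerSeries.coeff_mk, PowerSeries.coeff_C_mul]
    rw [mcnt_succ, if_neg (by omega)]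
    rw [mcnt_neg_left _ _ _ _ _ (by omega : (0:ℤ)-2 < 0),
      mcnt_neg_left _ _ _ _ _ (by omega : (0:ℤ)-1 < 0)]
    ring_nf

end Series

end MotzkinAux

open MotzkinAux

/-- the generating function `A = A_{0,0}` of the `(u,l,d)`-Motzkin numbers of
rank 2 satisfies `0 = 1 + (lx−1)A − x²(d₂u₂−d₁u₁)A² + x²(xu₁²d₂+xu₂d₁²−2xlu₂d₂+2d₂u₂)A³
− u₂d₂x⁴(d₂u₂−d₁u₁)A⁴ + x⁴u₂²d₂²(lx−1)A⁵ + x⁶u₂³d₂³A⁶`. -/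
theorem motzkin_rank_two_gf_poly (u₁ u₂ l d₁ d₂ : ℕ)
    (A : PowerSeries ℚ)
    (hA : A = motzkinGF 2 (fun p => if p = 1 then u₁ else if p = 2 then u₂ else 0) l
      (fun q => if q = 1 then d₁ else if q = 2 then d₂ else 0) 0 0) :
    (0 : PowerSeries ℚ) =
      1 + (C (l : ℚ) * X - 1) * A
        - X ^ 2 * C ((d₂ : ℚ) * (u₂ : ℚ) - (d₁ : ℚ) * (u₁ : ℚ)) * A ^ 2
        + X ^ 2 *
            (X * C ((u₁ : ℚ) ^ 2 * (d₂ : ℚ)) + X * C ((u₂ : ℚ) * (d₁ : ℚ) ^ 2)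
              - 2 * X * C ((l : ℚ) * (u₂ : ℚ) * (d₂ : ℚ)) + C (2 * (d₂ : ℚ) * (u₂ : ℚ))) *
            A ^ 3
        - C ((u₂ : ℚ) * (d₂ : ℚ)) * X ^ 4 *
            C ((d₂ : ℚ) * (u₂ : ℚ) - (d₁ : ℚ) * (u₁ : ℚ)) * A ^ 4
        + X ^ 4 * C ((u₂ : ℚ) ^ 2 * (d₂ : ℚ) ^ 2) * (C (l : ℚ) * X - 1) * A ^ 5
        + X ^ 6 * C ((u₂ : ℚ) ^ 3 * (d₂ : ℚ) ^ 3) * A ^ 6 := by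
  have hA0 : A = S (u₁:ℚ) (u₂:ℚ) (l:ℚ) (d₁:ℚ) (d₂:ℚ) 0 0 := by
    rw [hA]
    ext n
    rw [motzkinGF, PowerSeries.coeff_mk, S, PowerSeries.coeff_mk,
      motzkin_eq_mcnt]
    norm_num
  set AA := S (u₁:ℚ) (u₂:ℚ) (l:ℚ) (d₁:ℚ) (d₂:ℚ) 0 0 with hAA
  set Bs := S (u₁:ℚ) (u₂:ℚ) (l:ℚ) (d₁:ℚ) (d₂:ℚ) 0 1 with hBs
  set Cs := S (u₁:ℚ) (u₂:ℚ) (l:ℚ) (d₁:ℚ) (d₂:ℚ) 1 0 with hCs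
  set Ds := S (u₁:ℚ) (u₂:ℚ) (l:ℚ) (d₁:ℚ) (d₂:ℚ) 1 1 with hDs
  set fS := FP (u₁:ℚ) (u₂:ℚ) (l:ℚ) (d₁:ℚ) (d₂:ℚ) 0 with hfS
  set gS := FP (u₁:ℚ) (u₂:ℚ) (l:ℚ) (d₁:ℚ) (d₂:ℚ) 1 with hgS
  set eS := FP (d₁:ℚ) (d₂:ℚ) (l:ℚ) (u₁:ℚ) (u₂:ℚ) 0 with heS
  have h1 : fS = X * (C (d₁:ℚ) * AA + C (d₂:ℚ) * Bs) := by
    rw [hfS, FP_eq]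
  have h3 : gS = X * (C (d₁:ℚ) * Cs + C (d₂:ℚ) * Ds) := by
    rw [hgS, FP_eq]
  have h2 : eS = X * (C (u₁:ℚ) * AA + C (u₂:ℚ) * Cs) := by
    rw [heS, FP_eq, S_rev (d₁:ℚ) (d₂:ℚ) (l:ℚ) (u₁:ℚ) (u₂:ℚ) 0 0,
      S_rev (d₁:ℚ) (d₂:ℚ) (l:ℚ) (u₁:ℚ) (u₂:ℚ) 0 1]
  have h4 : Cs = fS * AA := by
    have hc := S_claim (u₁:ℚ) (u₂:ℚ) (l:ℚ) (d₁:ℚ) (d₂:ℚ) 0 le_rfl 0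
    rw [show (0:ℤ)+1 = 1 by ring, show (0:ℤ)-1 = -1 by ring,
      S_neg_right _ _ _ _ _ (by norm_num : (-1:ℤ) < 0), zero_add] at hc
    exact hc
  have h5 : Ds = AA + fS * Bs := by
    have hc := S_claim (u₁:ℚ) (u₂:ℚ) (l:ℚ) (d₁:ℚ) (d₂:ℚ) 0 le_rfl 1
    rw [show (0:ℤ)+1 = 1 by ring, show (1:ℤ)-1 = 0 by ring] at hc
    exact hc
  have h6 : Bs = eS * AA := by
    have hc := S_claim (d₁:ℚ) (d₂:ℚ) (l:ℚ) (u₁:ℚ) (u₂:ℚ) 0 le_rfl 0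
    rw [show (0:ℤ)+1 = 1 by ring, show (0:ℤ)-1 = -1 by ring,
      S_neg_right _ _ _ _ _ (by norm_num : (-1:ℤ) < 0), zero_add,
      S_rev (d₁:ℚ) (d₂:ℚ) (l:ℚ) (u₁:ℚ) (u₂:ℚ) 1 0,
      S_rev (d₁:ℚ) (d₂:ℚ) (l:ℚ) (u₁:ℚ) (u₂:ℚ) 0 0] at hc
    exact hc
  have h7 : AA = 1 + X * (C (l:ℚ) * AA + C (u₁:ℚ) * Cs + C (u₂:ℚ) * (gS * AA)) := by
    have h20 : S (u₁:ℚ) (u₂:ℚ) (l:ℚ) (d₁:ℚ) (d₂:ℚ) 2 0 = gS * AA := by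
      have hc := S_claim (u₁:ℚ) (u₂:ℚ) (l:ℚ) (d₁:ℚ) (d₂:ℚ) 1 (by norm_num) 0
      rw [show (1:ℤ)+1 = 2 by ring, show (0:ℤ)-1 = -1 by ring,
        S_neg_right _ _ _ _ _ (by norm_num : (-1:ℤ) < 0), zero_add] at hc
      exact hc
    have hc := S_first_step (u₁:ℚ) (u₂:ℚ) (l:ℚ) (d₁:ℚ) (d₂:ℚ)
    rw [h20] at hc
    exact hc
  rw [hA0]
  simp only [map_mul, map_sub, map_pow, map_ofNat]
  linear_combination (norm := ring_nf)
    (eS * (1 - X^2 * C (u₂:ℚ) * C (d₂:ℚ) * AA^2)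
      + ((X * C (d₁:ℚ) * AA + X^2 * C (d₂:ℚ) * C (u₁:ℚ) * AA^2)
          - fS * (1 - X^2 * C (u₂:ℚ) * C (d₂:ℚ) * AA^2)^2) * X * C (u₂:ℚ) * AA) * h1
    + (eS * (1 - X^2 * C (u₂:ℚ) * C (d₂:ℚ) * AA^2) * X * C (d₂:ℚ) * AA
      + ((X * C (d₁:ℚ) * AA + X^2 * C (d₂:ℚ) * C (u₁:ℚ) * AA^2)
          - fS * (1 - X^2 * C (u₂:ℚ) * C (d₂:ℚ) * AA^2)^2)) * h2
    + ((1 - X^2 * C (u₂:ℚ) * C (d₂:ℚ) * AA^2)^2 * X * C (u₂:ℚ) * AA) * h3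
    + ((1 - X^2 * C (u₂:ℚ) * C (d₂:ℚ) * AA^2)^2 * X * C (u₁:ℚ)
      + (1 - X^2 * C (u₂:ℚ) * C (d₂:ℚ) * AA^2)^2 * X^2 * C (u₂:ℚ) * C (d₁:ℚ) * AA
      + eS * (1 - X^2 * C (u₂:ℚ) * C (d₂:ℚ) * AA^2) * X^2 * C (u₂:ℚ) * C (d₂:ℚ) * AA
      + ((X * C (d₁:ℚ) * AA + X^2 * C (d₂:ℚ) * C (u₁:ℚ) * AA^2)
          - fS * (1 - X^2 * C (u₂:ℚ) * C (d₂:ℚ) * AA^2)^2) * X * C (u₂:ℚ)) * h4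
    + ((1 - X^2 * C (u₂:ℚ) * C (d₂:ℚ) * AA^2)^2 * X^2 * C (u₂:ℚ) * C (d₂:ℚ) * AA) * h5
    + ((1 - X^2 * C (u₂:ℚ) * C (d₂:ℚ) * AA^2)^2 * X^2 * C (u₂:ℚ) * C (d₂:ℚ) * AA * fS
      + eS * (1 - X^2 * C (u₂:ℚ) * C (d₂:ℚ) * AA^2) * X * C (d₂:ℚ)
      + ((X * C (d₁:ℚ) * AA + X^2 * C (d₂:ℚ) * C (u₁:ℚ) * AA^2)
          - fS * (1 - X^2 * C (u₂:ℚ) * C (d₂:ℚ) * AA^2)^2) * X^2 * C (u₂:ℚ)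
            * C (d₂:ℚ) * AA) * h6
    + ((1 - X^2 * C (u₂:ℚ) * C (d₂:ℚ) * AA^2)^2) * h7
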